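/- Let P ∈ M_N(ℂ) be a nonzero orthogonal projection, let E_1,…,E_n ∈ M_N(ℂ), let η_1,…,η_n ∈ {+1,−1} and let η = diag(η_1,…,η_n) ∈ M_n(ℂ). Suppose C ∈ M_n(ℂ) is pseudohermitian with respect to η (i.e. C† = η C η) and satisfies the pseudohermitian form of the quantum error correcting conditions η_i · P E_i† E_j P = C_{ij} P for all i, j. Assume moreover that the matrix η C is positive definite. Then there exist a matrix u ∈ M_n(ℂ) that is pseudounitary with respect to η (i.e. u† η u = η) and real numbers d_1,…,d_n such that the operators F_j = Σ_k E_k u_{kj} satisfy the diagonalized quantum error correcting conditions P F_i† F_j P = δ_{ij} d_i P for all i, j. -/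

import Mathlib

open Matrix ComplexOrder


lemma aux_quad_diag {n : ℕ} (g : Fin n → ℝ) (w : Fin n → ℂ) :
    star w ⬝ᵥ (Matrix.diagonal (fun i => (g i : ℂ))) *ᵥ w
      = ((∑ i, g i * Complex.normSq (w i) : ℝ) : ℂ) := by
  simp only [dotProduct, mulVec_diagonal, Complex.normSq_eq_conj_mul_self, Complex.ofReal_sum,
    Complex.ofReal_mul, Pi.star_apply, RingHom.coe_coe]
  refine Finset.sum_congr rfl fun i _ => ?_
  simp only [RCLike.star_def]
  ring

lemma aux_quad_conj {n : ℕ} (A D : Matrix (Fin n) (Fin n) ℂ) (x : Fin n → ℂ) :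
    star x ⬝ᵥ (Aᴴ * D * A) *ᵥ x = star (A *ᵥ x) ⬝ᵥ D *ᵥ (A *ᵥ x) := by
  rw [star_mulVec, ← mulVec_mulVec, ← mulVec_mulVec, dotProduct_mulVec]


-- disjointness dimension lemma
lemma aux_finrank_add_le {n : ℕ} (X : Matrix (Fin n) (Fin n) ℂ)
    (V W : Submodule ℂ (Fin n → ℂ))
    (hV : ∀ x ∈ V, x ≠ 0 → 0 < star x ⬝ᵥ X *ᵥ x)
    (hW : ∀ x ∈ W, ¬ (0 < star x ⬝ᵥ X *ᵥ x)) :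
    Module.finrank ℂ V + Module.finrank ℂ W ≤ n := by
  have hdisj : Disjoint V W := by
    rw [Submodule.disjoint_def]
    intro x hxV hxW
    by_contra hx
    exact hW x hxW (hV x hxV hx)
  have := Submodule.finrank_add_finrank_le_of_disjoint hdisj
  simpa using this

lemma aux_eig_submodule {n : ℕ} {X : Matrix (Fin n) (Fin n) ℂ} (hX : X.IsHermitian)
    (p : Fin n → Prop) [DecidablePred p] :
    ∃ V : Submodule ℂ (Fin n → ℂ), Module.finrank ℂ V = Fintype.card {i // p i} ∧
      ∀ x ∈ V, ∃ y : Fin n → ℂ, (x ≠ 0 → y ≠ 0) ∧ (∀ i, ¬ p i → y i = 0) ∧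
        star x ⬝ᵥ X *ᵥ x = ((∑ i, hX.eigenvalues i * Complex.normSq (y i) : ℝ) : ℂ) := by
  classical
  set W0 : Matrix (Fin n) (Fin n) ℂ := (hX.eigenvectorUnitary : Matrix (Fin n) (Fin n) ℂ)
  have hW0 : star W0 * W0 = 1 := Unitary.coe_star_mul_self _
  set L : ({i // p i} → ℂ) →ₗ[ℂ] (Fin n → ℂ) :=
    (Matrix.mulVecLin W0).comp
      (Function.ExtendByZero.linearMap ℂ (Subtype.val : {i // p i} → Fin n))
  have hLinj : Function.Injective L := by
    intro a b hab
    simp only [L, LinearMap.comp_apply, Matrix.mulVecLin_apply] at hab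
    have h2 : ∀ z : Fin n → ℂ, star W0 *ᵥ (W0 *ᵥ z) = z := by
      intro z; rw [mulVec_mulVec, hW0, one_mulVec]
    have := congrArg (fun v => star W0 *ᵥ v) hab
    simp only [h2] at this
    funext i
    have := congrFun this i.1
    simpa [Function.ExtendByZero.linearMap_apply, Subtype.val_injective.extend_apply] using this
  refine ⟨LinearMap.range L, ?_, ?_⟩
  · rw [LinearMap.finrank_range_of_inj hLinj]
    simp
  · rintro x ⟨c, rfl⟩
    set y : Fin n → ℂ := Function.extend Subtype.val c 0 with hy
    have hLc : L c = W0 *ᵥ y := rfl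
    refine ⟨y, ?_, ?_, ?_⟩
    · intro hx hy0
      apply hx; rw [hLc, hy0, mulVec_zero]
    · intro i hi
      rw [hy, Function.extend_apply']
      · rfl
      · rintro ⟨b, rfl⟩; exact hi b.2
    · rw [hLc]
      have hXW : X * W0 = W0 * diagonal (fun i => (hX.eigenvalues i : ℂ)) := by
        conv_lhs => rw [hX.spectral_theorem, Unitary.conjStarAlgAut_apply]
        rw [mul_assoc, mul_assoc]
        rw [show (star W0 : Matrix (Fin n) (Fin n) ℂ) * W0 = 1 from hW0, mul_one]
        rfl
      have e1 : X *ᵥ (W0 *ᵥ y) = W0 *ᵥ ((diagonal (fun i => (hX.eigenvalues i : ℂ))) *ᵥ y) := by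
        rw [mulVec_mulVec, hXW, ← mulVec_mulVec]
      rw [e1, star_mulVec, dotProduct_mulVec, vecMul_vecMul, ← star_eq_conjTranspose, hW0,
        vecMul_one]
      exact aux_quad_diag _ _



lemma aux_ker_submodule {n : ℕ} (A : Matrix (Fin n) (Fin n) ℂ) (p : Fin n → Prop)
    [DecidablePred p] :
    ∃ V : Submodule ℂ (Fin n → ℂ),
      n ≤ Module.finrank ℂ V + Fintype.card {i // p i} ∧
      ∀ x ∈ V, ∀ i, p i → (A *ᵥ x) i = 0 := by
  classical
  set K : (Fin n → ℂ) →ₗ[ℂ] ({i // p i} → ℂ) :=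
    (LinearMap.funLeft ℂ ℂ (Subtype.val : {i // p i} → Fin n)).comp (Matrix.mulVecLin A)
  refine ⟨LinearMap.ker K, ?_, ?_⟩
  · have h1 := LinearMap.finrank_range_add_finrank_ker K
    have h2 : Module.finrank ℂ (LinearMap.range K) ≤ Fintype.card {i // p i} := by
      have := Submodule.finrank_le (LinearMap.range K)
      simpa using this
    have h3 : Module.finrank ℂ (Fin n → ℂ) = n := by simp
    omega
  · intro x hx i hi
    have := congrFun (LinearMap.mem_ker.mp hx) ⟨i, hi⟩
    simpa [K, LinearMap.funLeft] using this

lemma aux_sylvester {n : ℕ} (η : Fin n → ℝ) (hη : ∀ i, η i = 1 ∨ η i = -1)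
    (A : Matrix (Fin n) (Fin n) ℂ) (hA : IsUnit A.det)
    {X : Matrix (Fin n) (Fin n) ℂ} (hX : X.IsHermitian)
    (hXA : X = Aᴴ * Matrix.diagonal (fun i => (η i : ℂ)) * A) :
    Fintype.card {i // 0 < hX.eigenvalues i} = Fintype.card {i // η i = 1} := by
  classical
  have hAinj : Function.Injective (fun x => A *ᵥ x) :=
    Matrix.mulVec_injective_iff_isUnit.mpr ((Matrix.isUnit_iff_isUnit_det A).mpr hA)
  have quadA : ∀ x, star x ⬝ᵥ X *ᵥ x
      = ((∑ i, η i * Complex.normSq ((A *ᵥ x) i) : ℝ) : ℂ) := by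
    intro x; rw [hXA, aux_quad_conj, aux_quad_diag]
  set pX := Fintype.card {i // 0 < hX.eigenvalues i} with hpX
  set pη := Fintype.card {i // η i = 1} with hpη
  -- direction pX ≤ pη
  obtain ⟨V, hVrank, hVq⟩ := aux_eig_submodule hX (fun i => 0 < hX.eigenvalues i)
  obtain ⟨W, hWrank, hWq⟩ := aux_ker_submodule A (fun i => η i = 1)
  have h1 : Module.finrank ℂ V + Module.finrank ℂ W ≤ n := by
    apply aux_finrank_add_le X
    · intro x hx hx0
      obtain ⟨y, hy0, hysupp, hyq⟩ := hVq x hx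
      rw [hyq]
      rw [show (0:ℂ) = ((0:ℝ):ℂ) by norm_num, Complex.real_lt_real]
      apply Finset.sum_pos'
      · intro i _
        by_cases hpi : 0 < hX.eigenvalues i
        · exact mul_nonneg hpi.le (Complex.normSq_nonneg _)
        · rw [hysupp i hpi]; simp
      · obtain ⟨i₀, hi₀⟩ := Function.ne_iff.mp (hy0 hx0)
        have hpi₀ : 0 < hX.eigenvalues i₀ := by
          by_contra hc; exact hi₀ (hysupp i₀ hc)
        refine ⟨i₀, Finset.mem_univ _, ?_⟩
        have : 0 < Complex.normSq (y i₀) := by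
          simpa [Complex.normSq_pos] using hi₀
        exact mul_pos hpi₀ this
    · intro x hx
      rw [quadA x, show (0:ℂ) = ((0:ℝ):ℂ) by norm_num, Complex.real_lt_real]
      apply not_lt.mpr
      apply Finset.sum_nonpos
      intro i _
      by_cases hpi : η i = 1
      · rw [hWq x hx i hpi]; simp
      · have : η i = -1 := (hη i).resolve_left hpi
        rw [this]
        nlinarith [Complex.normSq_nonneg ((A *ᵥ x) i)]
  -- direction pη ≤ pX
  obtain ⟨V', hVrank', hVq'⟩ := aux_ker_submodule A (fun i => ¬ η i = 1)
  obtain ⟨W', hWrank', hWq'⟩ := aux_eig_submodule hX (fun i => ¬ 0 < hX.eigenvalues i)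
  have h2 : Module.finrank ℂ V' + Module.finrank ℂ W' ≤ n := by
    apply aux_finrank_add_le X
    · intro x hx hx0
      rw [quadA x, show (0:ℂ) = ((0:ℝ):ℂ) by norm_num, Complex.real_lt_real]
      apply Finset.sum_pos'
      · intro i _
        by_cases hpi : η i = 1
        · rw [hpi]; nlinarith [Complex.normSq_nonneg ((A *ᵥ x) i)]
        · rw [hVq' x hx i hpi]; simp
      · have hAx0 : A *ᵥ x ≠ 0 := by
          intro hc
          exact hx0 (hAinj (by simpa using hc : (fun x => A *ᵥ x) x = (fun x => A *ᵥ x) 0))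
        obtain ⟨i₀, hi₀⟩ := Function.ne_iff.mp hAx0
        have hpi₀ : η i₀ = 1 := by
          by_contra hc; exact hi₀ (hVq' x hx i₀ hc)
        refine ⟨i₀, Finset.mem_univ _, ?_⟩
        have : 0 < Complex.normSq ((A *ᵥ x) i₀) := by
          simpa [Complex.normSq_pos] using hi₀
        rw [hpi₀]; linarith
    · intro x hx
      obtain ⟨y, hy0, hysupp, hyq⟩ := hWq' x hx
      rw [hyq, show (0:ℂ) = ((0:ℝ):ℂ) by norm_num, Complex.real_lt_real]
      apply not_lt.mpr
      apply Finset.sum_nonpos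
      intro i _
      by_cases hpi : 0 < hX.eigenvalues i
      · rw [hysupp i (by simpa using hpi)]; simp
      · nlinarith [Complex.normSq_nonneg (y i), not_lt.mp hpi]
  have hcW' : Module.finrank ℂ W' = n - pX := by
    rw [hWrank', hpX, Fintype.card_subtype_compl]
    simp
  have hcV' : Fintype.card {i // ¬ η i = 1} = n - pη := by
    rw [hpη, Fintype.card_subtype_compl]
    simp
  have hpXle : pX ≤ n := by rw [hpX]; simpa using Fintype.card_subtype_le (α := Fin n) _
  have hpηle : pη ≤ n := by rw [hpη]; simpa using Fintype.card_subtype_le (α := Fin n) _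
  rw [hcV'] at hVrank'
  omega


lemma aux_perm {n : ℕ} (p q : Fin n → Prop) [DecidablePred p] [DecidablePred q]
    (h : Fintype.card {i // p i} = Fintype.card {i // q i}) :
    ∃ σ : Equiv.Perm (Fin n), ∀ i, (q i → p (σ i)) ∧ (¬ q i → ¬ p (σ i)) := by
  have h2 : Fintype.card {i // ¬ q i} = Fintype.card {i // ¬ p i} := by
    rw [Fintype.card_subtype_compl, Fintype.card_subtype_compl, h]
  set e₁ : {i // q i} ≃ {i // p i} := Fintype.equivOfCardEq h.symm
  set e₂ : {i // ¬ q i} ≃ {i // ¬ p i} := Fintype.equivOfCardEq h2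
  refine ⟨(Equiv.sumCompl q).symm.trans ((e₁.sumCongr e₂).trans (Equiv.sumCompl p)), fun i => ⟨?_, ?_⟩⟩
  · intro hi
    simp only [Equiv.trans_apply, Equiv.sumCompl_symm_apply_of_pos hi, Equiv.sumCongr_apply,
      Sum.map_inl, Equiv.sumCompl_apply_inl]
    exact (e₁ ⟨i, hi⟩).2
  · intro hi
    simp only [Equiv.trans_apply, Equiv.sumCompl_symm_apply_of_neg hi, Equiv.sumCongr_apply,
      Sum.map_inr, Equiv.sumCompl_apply_inr]
    exact (e₂ ⟨i, hi⟩).2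

lemma aux_QDQ {n : ℕ} (σ : Equiv.Perm (Fin n)) (t : Fin n → ℝ) (g : Fin n → ℂ) :
    (Matrix.of fun k i => if σ i = k then (t i : ℂ) else 0)ᴴ * Matrix.diagonal g *
      (Matrix.of fun k i => if σ i = k then (t i : ℂ) else 0)
    = Matrix.diagonal (fun i => ((t i : ℂ))^2 * g (σ i)) := by
  ext i j
  rw [Matrix.mul_apply]
  rw [Finset.sum_eq_single (σ i)]
  · simp only [Matrix.mul_diagonal, Matrix.conjTranspose_apply, Matrix.of_apply,
      Matrix.diagonal_apply]
    by_cases hij : i = j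
    · subst hij
      simp [Complex.conj_ofReal, sq]
      ring
    · have : ¬ σ j = σ i := fun h => hij (σ.injective h).symm
      simp [hij, this, Complex.conj_ofReal]
  · intro k _ hk
    simp only [Matrix.mul_diagonal, Matrix.conjTranspose_apply, Matrix.of_apply]
    rw [if_neg (fun h => hk h.symm)]
    simp
  · intro h
    exact absurd (Finset.mem_univ _) h

/-- **Lemma 1 (diagonalization of the pseudohermitian QEC conditions).**
Given a nonzero orthogonal projection `P`, operators `E i`, signs `η i ∈ {±1}`,
and a matrix `C` pseudohermitian w.r.t. `η` satisfying the pseudohermitian form of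
the QEC conditions `η i • P (E i)ᴴ (E j) P = C i j • P`, with `η C` positive definite,
there is a pseudounitary `u` such that the operators `F j = ∑ k, u k j • E k`
satisfy the diagonalized QEC conditions `P (F i)ᴴ (F j) P = δᵢⱼ dᵢ P`. -/
theorem stmt_0 {N n : ℕ} (P : Matrix (Fin N) (Fin N) ℂ)
    (hP : P ≠ 0) (hProj : P * P = P) (hPH : Pᴴ = P)
    (E : Fin n → Matrix (Fin N) (Fin N) ℂ)
    (η : Fin n → ℝ) (hη : ∀ i, η i = 1 ∨ η i = -1)
    (C : Matrix (Fin n) (Fin n) ℂ)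
    (hCpseudoherm : Cᴴ = Matrix.diagonal (fun i => (η i : ℂ)) * C *
      Matrix.diagonal (fun i => (η i : ℂ)))
    (hQEC : ∀ i j, (η i : ℂ) • (P * (E i)ᴴ * E j * P) = C i j • P)
    (hpos : (Matrix.diagonal (fun i => (η i : ℂ)) * C).PosDef) :
    ∃ (u : Matrix (Fin n) (Fin n) ℂ) (d : Fin n → ℝ),
      uᴴ * Matrix.diagonal (fun i => (η i : ℂ)) * u =
        Matrix.diagonal (fun i => (η i : ℂ)) ∧
      ∀ i j, P * (∑ k, u k i • E k)ᴴ * (∑ k, u k j • E k) * P =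
        (if i = j then (d i : ℂ) else 0) • P := by
  classical
  set Dη : Matrix (Fin n) (Fin n) ℂ := Matrix.diagonal (fun i => (η i : ℂ)) with hDη
  set M : Matrix (Fin n) (Fin n) ℂ := Dη * C with hMdef
  have hM : M.PosDef := hpos
  have hη2 : ∀ i, (η i : ℂ) * (η i : ℂ) = 1 := by
    intro i; rcases hη i with h | h <;> rw [h] <;> norm_num
  -- restated QEC
  have hQEC' : ∀ k l, P * (E k)ᴴ * E l * P = M k l • P := by
    intro k l
    have h2 := congrArg (fun Z => (η k : ℂ) • Z) (hQEC k l)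
    simp only [smul_smul, hη2 k, one_smul] at h2
    rw [h2, hMdef, hDη]
    congr 1
    rw [Matrix.diagonal_mul]
  -- square root and inverse
  open scoped MatrixOrder in
  set B : Matrix (Fin n) (Fin n) ℂ := CFC.sqrt M with hBdef
  open scoped MatrixOrder in
  have hBps : B.PosSemidef := Matrix.nonneg_iff_posSemidef.mp (CFC.sqrt_nonneg M)
  have hBH : Bᴴ = B := hBps.1
  open scoped MatrixOrder in
  have hBB : B * B = M := CFC.sqrt_mul_sqrt_self M (Matrix.nonneg_iff_posSemidef.mpr hM.posSemidef)
  have hMdet : M.det ≠ 0 := hM.det_pos.ne'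
  have hBdetne : B.det ≠ 0 := by
    intro h; apply hMdet; rw [← hBB, Matrix.det_mul, h, mul_zero]
  have hBdet : IsUnit B.det := isUnit_iff_ne_zero.mpr hBdetne
  set A : Matrix (Fin n) (Fin n) ℂ := B⁻¹ with hAdef
  have hAB : A * B = 1 := Matrix.nonsing_inv_mul B hBdet
  have hBA : B * A = 1 := Matrix.mul_nonsing_inv B hBdet
  have hAdet : IsUnit A.det := by
    apply IsUnit.of_mul_eq_one (a := A.det) B.det
    rw [← Matrix.det_mul, hAB, Matrix.det_one]
  have hAH : Aᴴ = A := by rw [hAdef, Matrix.conjTranspose_nonsing_inv, hBH]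
  -- the hermitian matrix X
  set X : Matrix (Fin n) (Fin n) ℂ := Aᴴ * Dη * A with hXdef
  have hDηH : Dηᴴ = Dη := by
    rw [hDη]
    ext i j
    by_cases h : i = j
    · subst h
      simp [Matrix.conjTranspose_apply, Complex.conj_ofReal]
    · simp [Matrix.conjTranspose_apply, Matrix.diagonal_apply_ne, h, Ne.symm h]
  have hXH : X.IsHermitian := by
    show Xᴴ = X
    rw [hXdef, Matrix.conjTranspose_mul, Matrix.conjTranspose_mul,
      Matrix.conjTranspose_conjTranspose, hDηH, Matrix.mul_assoc]
  set lam : Fin n → ℝ := hXH.eigenvalues with hlam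
  -- eigenvalues nonzero
  have hXdet : X.det ≠ 0 := by
    rw [hXdef]
    rw [Matrix.det_mul, Matrix.det_mul]
    have h1 : Aᴴ.det ≠ 0 := by rw [hAH]; exact hAdet.ne_zero
    have h2 : Dη.det ≠ 0 := by
      rw [hDη, Matrix.det_diagonal]
      apply Finset.prod_ne_zero_iff.mpr
      intro i _
      intro hc
      rcases hη i with h | h <;> rw [h] at hc <;> simp at hc
    exact mul_ne_zero (mul_ne_zero h1 h2) hAdet.ne_zero
  have hlam0 : ∀ i, lam i ≠ 0 := by
    intro i hc
    apply hXdet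
    rw [hXH.det_eq_prod_eigenvalues]
    apply Finset.prod_eq_zero (Finset.mem_univ i)
    rw [← hlam, hc]
    simp
  -- Sylvester + permutation
  have hcard := aux_sylvester η hη A hAdet hXH rfl
  obtain ⟨σ, hσ⟩ := aux_perm (fun i => 0 < lam i) (fun i => η i = 1) hcard
  -- scaling
  set t : Fin n → ℝ := fun i => (Real.sqrt |lam (σ i)|)⁻¹ with ht
  have hkey : ∀ i, (t i)^2 * lam (σ i) = η i := by
    intro i
    have habs : (0:ℝ) < |lam (σ i)| := abs_pos.mpr (hlam0 (σ i))
    have hsq : (t i)^2 = |lam (σ i)|⁻¹ := by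
      show ((Real.sqrt |lam (σ i)|)⁻¹)^2 = |lam (σ i)|⁻¹
      rw [← Real.sqrt_inv]
      exact Real.sq_sqrt (by positivity)
    rcases hη i with h | h
    · have hpos' : 0 < lam (σ i) := (hσ i).1 h
      rw [hsq, h, abs_of_pos hpos']
      field_simp
    · have hneg : lam (σ i) < 0 := by
        rcases lt_trichotomy (lam (σ i)) 0 with hc | hc | hc
        · exact hc
        · exact absurd hc (hlam0 (σ i))
        · exact absurd hc ((hσ i).2 (by rw [h]; norm_num))
      rw [hsq, h, abs_of_neg hneg]
      field_simp
      rw [div_self (hlam0 (σ i))]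
  set Q : Matrix (Fin n) (Fin n) ℂ := Matrix.of fun k i => if σ i = k then (t i : ℂ) else 0
    with hQdef
  set W0 : Matrix (Fin n) (Fin n) ℂ := (hXH.eigenvectorUnitary : Matrix (Fin n) (Fin n) ℂ)
    with hW0
  have hW0W : W0ᴴ * W0 = 1 := by
    rw [← Matrix.star_eq_conjTranspose]; exact Unitary.coe_star_mul_self _
  have hWXW : W0ᴴ * X * W0 = Matrix.diagonal (fun i => (lam i : ℂ)) := by
    rw [← Matrix.star_eq_conjTranspose]
    have := hXH.conjStarAlgAut_star_eigenvectorUnitary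
    simp only [Unitary.conjStarAlgAut_apply, Unitary.coe_star, star_star] at this
    exact this
  set u : Matrix (Fin n) (Fin n) ℂ := A * W0 * Q with hu
  have huH : uᴴ = Qᴴ * W0ᴴ * Aᴴ := by
    rw [hu, Matrix.conjTranspose_mul, Matrix.conjTranspose_mul, Matrix.mul_assoc]
  -- pseudounitarity
  have hgoal1 : uᴴ * Dη * u = Dη := by
    have e1 : uᴴ * Dη * u = Qᴴ * (W0ᴴ * X * W0) * Q := by
      rw [huH, hu, hXdef]
      simp only [Matrix.mul_assoc]
    rw [e1, hWXW, aux_QDQ]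
    rw [hDη]
    have hfun : (fun i => ((t i : ℂ))^2 * ((lam (σ i) : ℝ) : ℂ)) = fun i => ((η i : ℝ) : ℂ) := by
      funext i
      rw [← hkey i]
      push_cast
      ring
    rw [hfun]
  -- diagonalization of M
  have hAMA : Aᴴ * M * A = 1 := by
    rw [hAH, ← hBB, ← Matrix.mul_assoc, Matrix.mul_assoc (A * B), hAB, hBA, one_mul]
  have hgoal2 : uᴴ * M * u = Matrix.diagonal (fun i => ((t i)^2 : ℂ)) := by
    have e1 : uᴴ * M * u = Qᴴ * (W0ᴴ * (Aᴴ * M * A) * W0) * Q := by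
      rw [huH, hu]
      simp only [Matrix.mul_assoc]
    rw [e1, hAMA, mul_one, hW0W]
    have e2 : (Qᴴ : Matrix (Fin n) (Fin n) ℂ) * 1 * Q
        = Qᴴ * Matrix.diagonal (fun _ => (1:ℂ)) * Q := by rw [Matrix.diagonal_one]
    rw [e2, aux_QDQ]
    congr 1
    funext i
    push_cast
    ring
  -- final assembly
  refine ⟨u, fun i => (t i)^2, hgoal1, ?_⟩
  intro i j
  have expand : P * (∑ k, u k i • E k)ᴴ * (∑ k, u k j • E k) * P
      = ∑ l, ∑ k, (u l j * star (u k i)) • (P * (E k)ᴴ * E l * P) := by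
    simp only [Matrix.conjTranspose_sum, Matrix.conjTranspose_smul, Matrix.mul_sum,
      Matrix.sum_mul, Matrix.smul_mul, Matrix.mul_smul, smul_smul, Finset.smul_sum]
  rw [expand]
  have step2 : ∀ k l, (u l j * star (u k i)) • (P * (E k)ᴴ * E l * P)
      = (u l j * star (u k i) * M k l) • P := by
    intro k l
    rw [hQEC' k l, smul_smul]
  simp only [step2]
  have step3 : ∑ l, ∑ k, (u l j * star (u k i) * M k l) • P
      = ((uᴴ * M * u) i j) • P := by
    simp only [← Finset.sum_smul]
    congr 1
    simp only [Matrix.mul_apply, Matrix.conjTranspose_apply, Finset.sum_mul]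
    refine Finset.sum_congr rfl fun l _ => Finset.sum_congr rfl fun k _ => by ring
  rw [step3, hgoal2, Matrix.diagonal_apply]
  by_cases hij : i = j
  · subst hij
    norm_num
  · simp [hij]
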